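/- Let circles Ω and ω be internally tangent at a point A, and let B ≠ A be a point in the plane. Let f be a projective involution of the circle ω. For X on ω, define Y as the second intersection of the circle through A, X, B with Ω, and Y' as the second intersection of the circle through A, f(X), B with Ω. Then the induced map Y ↦ Y' is a projective involution of Ω. -/

import Mathlib

open EuclideanGeometry Metric

noncomputable section

/-- The cross ratio of four points of the plane `ℂ`.  A bijection of a circle onto itself
is a projectivity of the circle (viewed as a conic) iff it preserves this cross ratio. -/
def crossRatio (a b c d : ℂ) : ℂ := ((a - c) * (b - d)) / ((a - d) * (b - c))

/-- `f` is a projective involution of the circle `S`: it maps `S` to itself, is an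
involution on `S`, and preserves the cross ratio of points of `S`. -/
def IsCircleInvolution (S : Set ℂ) (f : ℂ → ℂ) : Prop :=
  (∀ X ∈ S, f X ∈ S) ∧ (∀ X ∈ S, f (f X) = X) ∧
  ∀ a ∈ S, ∀ b ∈ S, ∀ c ∈ S, ∀ d ∈ S,
    crossRatio (f a) (f b) (f c) (f d) = crossRatio a b c d

/-- Lemma 4 of the paper: transporting an involution from `ω` to `Ω` through circles
`(A X B)` yields an involution of `Ω`. -/
lemma conj_sphere {o : ℂ} {ρ : ℝ} {a : ℂ} (ha : dist a o = ρ) :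
    (starRingEnd ℂ) (a - o) * (a - o) = (ρ:ℂ)^2 := by
  rw [← Complex.normSq_eq_conj_mul_self]
  rw [Complex.dist_eq] at ha
  rw [← Complex.sq_norm, ha]; norm_cast

lemma ne_o {o : ℂ} {ρ : ℝ} {a : ℂ} (ha : dist a o = ρ) (h0 : 0 < ρ) : a - o ≠ 0 := by
  intro h'
  rw [sub_eq_zero] at h'
  rw [h', dist_self] at ha
  exact h0.ne ha

lemma cr_real_sphere (o : ℂ) (ρ : ℝ) (a b c d : ℂ)
    (ha : dist a o = ρ) (hb : dist b o = ρ) (hc : dist c o = ρ) (hd : dist d o = ρ) :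
    (crossRatio a b c d).im = 0 := by
  by_cases hden : (a - d) * (b - c) = 0
  · simp only [crossRatio]; rw [hden, div_zero]; simp
  obtain ⟨had, hbc⟩ := mul_ne_zero_iff.mp hden
  have hρ0 : (0:ℝ) ≤ ρ := ha ▸ dist_nonneg
  rcases hρ0.eq_or_lt with h0 | h0
  · have h1 : a = o := by rw [← dist_eq_zero, ha, h0]
    have h2 : d = o := by rw [← dist_eq_zero, hd, h0]
    exact absurd (by rw [h1, h2, sub_self]) had
  have hρ : (ρ:ℂ) ≠ 0 := by exact_mod_cast h0.ne'
  have hα := ne_o ha h0; have hβ := ne_o hb h0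
  have hγ := ne_o hc h0; have hδ := ne_o hd h0
  rw [← Complex.conj_eq_iff_im]
  have key : ∀ x y : ℂ, dist x o = ρ → dist y o = ρ →
      (starRingEnd ℂ) (x - y) = (ρ:ℂ)^2 * ((y - o) - (x - o)) / ((x - o) * (y - o)) := by
    intro x y hx hy
    have hx' := conj_sphere hx; have hy' := conj_sphere hy
    have hx0 := ne_o hx h0; have hy0 := ne_o hy h0
    have h2 : (starRingEnd ℂ) (x - y) = (starRingEnd ℂ) (x - o) - (starRingEnd ℂ) (y - o) := by
      rw [← map_sub]; ring_nf
    rw [h2, eq_div_iff (mul_ne_zero hx0 hy0)]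
    linear_combination (y - o) * hx' - (x - o) * hy'
  simp only [crossRatio]
  rw [map_div₀, map_mul, map_mul,
    key a c ha hc, key b d hb hd, key a d ha hd, key b c hb hc]
  rw [div_eq_div_iff]
  · field_simp
    ring
  · apply mul_ne_zero <;> rw [div_ne_zero_iff] <;>
      refine ⟨mul_ne_zero (pow_ne_zero _ hρ) ?_, mul_ne_zero (by assumption) (by assumption)⟩
    · have h1 : (d - o) - (a - o) = -(a - d) := by ring
      rw [h1]; exact neg_ne_zero.2 had
    · have h1 : (c - o) - (b - o) = -(b - c) := by ring
      rw [h1]; exact neg_ne_zero.2 hbc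
  · exact mul_ne_zero had hbc

lemma cr_real_collinear {s : Set ℂ} (h : Collinear ℝ s) {a b c d : ℂ}
    (ha : a ∈ s) (hb : b ∈ s) (hc : c ∈ s) (hd : d ∈ s) :
    (crossRatio a b c d).im = 0 := by
  obtain ⟨p, v, hv⟩ := (collinear_iff_exists_forall_eq_smul_vadd s).mp h
  obtain ⟨ta, ha'⟩ := hv a ha
  obtain ⟨tb, hb'⟩ := hv b hb
  obtain ⟨tc, hc'⟩ := hv c hc
  obtain ⟨td, hd'⟩ := hv d hd
  simp only [vadd_eq_add, Complex.real_smul] at ha' hb' hc' hd'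
  subst ha' hb' hc' hd'
  simp only [crossRatio]
  have e1 : ((ta:ℂ) * v + p) - ((tc:ℂ)*v + p) = ((ta - tc : ℝ):ℂ) * v := by push_cast; ring
  have e2 : ((tb:ℂ) * v + p) - ((td:ℂ)*v + p) = ((tb - td : ℝ):ℂ) * v := by push_cast; ring
  have e3 : ((ta:ℂ) * v + p) - ((td:ℂ)*v + p) = ((ta - td : ℝ):ℂ) * v := by push_cast; ring
  have e4 : ((tb:ℂ) * v + p) - ((tc:ℂ)*v + p) = ((tb - tc : ℝ):ℂ) * v := by push_cast; ring
  rw [e1, e2, e3, e4]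
  by_cases hv0 : v = 0
  · simp [hv0]
  by_cases h2 : ((ta - td)*(tb - tc) : ℝ) = 0
  · have : ((ta - td : ℝ):ℂ) * v * (((tb - tc : ℝ):ℂ) * v) = 0 := by
      have : ((ta - td : ℝ):ℂ) * ((tb - tc : ℝ):ℂ) = 0 := by push_cast; exact_mod_cast congrArg Complex.ofReal h2
      rw [show ((ta - td : ℝ):ℂ) * v * (((tb - tc : ℝ):ℂ) * v) = (((ta - td : ℝ):ℂ) * ((tb - tc : ℝ):ℂ)) * (v*v) by ring, this, zero_mul]
    rw [this, div_zero]; simp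
  · have hv2 : v * v ≠ 0 := mul_ne_zero hv0 hv0
    have : (((ta - tc : ℝ):ℂ) * v * (((tb - td : ℝ):ℂ) * v)) / (((ta - td : ℝ):ℂ) * v * (((tb - tc : ℝ):ℂ) * v))
        = (((ta - tc)*(tb - td) : ℝ):ℂ) / (((ta - td)*(tb - tc) : ℝ):ℂ) := by
      push_cast
      rw [show ((ta:ℂ) - tc) * v * (((tb:ℂ) - td) * v) = (((ta:ℂ)-tc)*((tb:ℂ)-td))*(v*v) by ring,
          show ((ta:ℂ) - td) * v * (((tb:ℂ) - tc) * v) = (((ta:ℂ)-td)*((tb:ℂ)-tc))*(v*v) by ring,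
          mul_div_mul_right _ _ hv2]
    rw [this, ← Complex.ofReal_div]
    exact Complex.ofReal_im _

lemma cr_moebius (α β γ δ : ℂ) (hdet : α*δ - β*γ ≠ 0) (a b c d : ℂ)
    (ha : γ*a + δ ≠ 0) (hb : γ*b + δ ≠ 0) (hc : γ*c + δ ≠ 0) (hd : γ*d + δ ≠ 0) :
    crossRatio ((α*a+β)/(γ*a+δ)) ((α*b+β)/(γ*b+δ)) ((α*c+β)/(γ*c+δ)) ((α*d+β)/(γ*d+δ))
      = crossRatio a b c d := by
  have diff : ∀ x y : ℂ, γ*x + δ ≠ 0 → γ*y + δ ≠ 0 →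
      (α*x+β)/(γ*x+δ) - (α*y+β)/(γ*y+δ) = ((α*δ - β*γ)*(x-y))/((γ*x+δ)*(γ*y+δ)) := by
    intro x y hx hy; rw [div_sub_div _ _ hx hy]; congr 1; ring
  simp only [crossRatio]
  rw [diff a c ha hc, diff b d hb hd, diff a d ha hd, diff b c hb hc]
  by_cases h2 : (a - d) * (b - c) = 0
  · rcases mul_eq_zero.mp h2 with h | h <;> rw [h2] <;> rw [h] <;> simp
  · obtain ⟨had, hbc⟩ := mul_ne_zero_iff.mp h2
    field_simp

lemma circ_line {c u : ℂ} (hu : u ≠ 0) (h : Complex.normSq (u - c) = Complex.normSq c) :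
    (c * u⁻¹).re = 1/2 := by
  have hns : Complex.normSq u ≠ 0 := (Complex.normSq_pos.mpr hu).ne'
  have h' : u.re * u.re + u.im * u.im = 2 * (c.re * u.re + c.im * u.im) := by
    simp only [Complex.normSq_apply, Complex.sub_re, Complex.sub_im] at h
    nlinarith [h]
  rw [Complex.mul_re, Complex.inv_re, Complex.inv_im]
  rw [Complex.normSq_apply] at hns ⊢
  have hns2 : u.re^2 + u.im^2 ≠ 0 := by rw [sq, sq]; exact hns
  field_simp
  nlinarith [h']

lemma line_circ {c w : ℂ} (h : (c * w).re = 1/2) :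
    Complex.normSq (w⁻¹ - c) = Complex.normSq c := by
  have hw : w ≠ 0 := by
    intro h0; rw [h0, mul_zero] at h; simp at h
  have hns : Complex.normSq w ≠ 0 := (Complex.normSq_pos.mpr hw).ne'
  have h' : c.re * w.re - c.im * w.im = 1/2 := by
    rw [Complex.mul_re] at h; linarith
  simp only [Complex.normSq_apply, Complex.sub_re, Complex.sub_im, Complex.inv_re, Complex.inv_im,
    Complex.normSq_apply] at *
  have hns2 : w.re^2 + w.im^2 ≠ 0 := by rw [sq, sq]; exact hns
  field_simp
  nlinarith [h', hns]




set_option maxHeartbeats 1000000 in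
theorem involution_transfer (O₁ O₂ A B : ℂ) (r R : ℝ)
    (hr : 0 < r) (hR : r < R)
    (hA₁ : dist O₁ A = r) (hA₂ : dist O₂ A = R) (htan : dist O₁ O₂ = R - r)
    (hB : B ≠ A)
    (f : ℂ → ℂ) (hf : IsCircleInvolution (sphere O₁ r) f)
    (Y : ℂ → ℂ)
    (hY : ∀ X ∈ sphere O₁ r, X ≠ A →
      Y X ∈ sphere O₂ R ∧ Y X ≠ A ∧
      (Concyclic ({A, X, B, Y X} : Set ℂ) ∨ Collinear ℝ ({A, X, B, Y X} : Set ℂ))) :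
    ∃ g : ℂ → ℂ, IsCircleInvolution (sphere O₂ R) g ∧
      ∀ X ∈ sphere O₁ r, X ≠ A → f X ≠ A → g (Y X) = Y (f X) := by
  classical
  have hrR : (0:ℝ) < R := hr.trans hR
  set c1 : ℂ := O₁ - A with hc1def
  set c2 : ℂ := O₂ - A with hc2def
  have hn1 : Complex.normSq c1 = r^2 := by
    rw [← Complex.sq_norm, hc1def, ← Complex.dist_eq, hA₁]
  have hn2 : Complex.normSq c2 = R^2 := by
    rw [← Complex.sq_norm, hc2def, ← Complex.dist_eq, hA₂]
  have hn3 : Complex.normSq (c1 - c2) = (R - r)^2 := by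
    rw [← Complex.sq_norm, show c1 - c2 = O₁ - O₂ by rw [hc1def, hc2def]; ring,
      ← Complex.dist_eq, htan]
  have hc1ne : c1 ≠ 0 := by
    intro h; rw [h] at hn1; simp at hn1; nlinarith
  -- tangency: c2 = (R/r) c1
  have hcc : c2 = ((R/r : ℝ) : ℂ) * c1 := by
    simp only [Complex.normSq_apply, Complex.sub_re, Complex.sub_im] at hn1 hn2 hn3
    have key : (r*c2.re - R*c1.re)^2 + (r*c2.im - R*c1.im)^2 = 0 := by nlinarith
    have h1 : r*c2.re = R*c1.re := by nlinarith [sq_nonneg (r*c2.re - R*c1.re), sq_nonneg (r*c2.im - R*c1.im)]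
    have h2 : r*c2.im = R*c1.im := by nlinarith [sq_nonneg (r*c2.re - R*c1.re), sq_nonneg (r*c2.im - R*c1.im)]
    apply Complex.ext <;> simp [Complex.mul_re, Complex.mul_im] <;> field_simp <;> linarith
  set ρ : ℝ := r/(2*R) with hρdef
  have hρpos : 0 < ρ := by positivity
  have hρlt : ρ < 1/2 := by rw [hρdef, div_lt_div_iff₀ (by linarith) (by norm_num)]; linarith
  have hρne : ρ ≠ 1/2 := hρlt.ne
  -- lines
  have hL1 : ∀ z : ℂ, z ∈ sphere O₁ r → z ≠ A → (c1 * (z - A)⁻¹).re = 1/2 := by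
    intro z hz hzA
    apply circ_line (sub_ne_zero.2 hzA)
    rw [show (z - A) - c1 = z - O₁ by rw [hc1def]; ring, hn1, ← Complex.sq_norm,
      ← Complex.dist_eq, (Metric.mem_sphere.mp hz)]
  have hL2 : ∀ z : ℂ, z ∈ sphere O₂ R → z ≠ A → (c1 * (z - A)⁻¹).re = ρ := by
    intro z hz hzA
    have h2 : (c2 * (z - A)⁻¹).re = 1/2 := by
      apply circ_line (sub_ne_zero.2 hzA)
      rw [show (z - A) - c2 = z - O₂ by rw [hc2def]; ring, hn2, ← Complex.sq_norm,
        ← Complex.dist_eq, (Metric.mem_sphere.mp hz)]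
    rw [hcc, mul_assoc] at h2
    rw [Complex.re_ofReal_mul] at h2
    rw [hρdef]
    field_simp at h2 ⊢
    linarith
  have hL1' : ∀ w : ℂ, (c1 * w).re = 1/2 → A + w⁻¹ ∈ sphere O₁ r := by
    intro w hw
    have := line_circ hw
    rw [Metric.mem_sphere, Complex.dist_eq, show A + w⁻¹ - O₁ = w⁻¹ - c1 by rw [hc1def]; ring,
      Complex.norm_def, this, hn1, Real.sqrt_sq hr.le]
  have hL2' : ∀ w : ℂ, (c1 * w).re = ρ → A + w⁻¹ ∈ sphere O₂ R := by
    intro w hw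
    have h2 : (c2 * w).re = 1/2 := by
      rw [hcc, mul_assoc]
      simp only [Complex.re_ofReal_mul]
      rw [hw, hρdef]; field_simp
    have := line_circ h2
    rw [Metric.mem_sphere, Complex.dist_eq, show A + w⁻¹ - O₂ = w⁻¹ - c2 by rw [hc2def]; ring,
      Complex.norm_def, this, hn2, Real.sqrt_sq hrR.le]
  set b0 : ℂ := (B - A)⁻¹ with hb0def
  have hb0ne : b0 ≠ 0 := inv_ne_zero (sub_ne_zero.2 hB)
  set β : ℝ := (c1 * b0).re with hβdef
  -- real-part computation along the pencil
  have hre_aff : ∀ (x : ℂ) (t : ℝ), (c1 * (x + (b0 - x) * ((t:ℂ))⁻¹)).re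
      = (c1*x).re + (β - (c1*x).re) * t⁻¹ := by
    intro x t
    have h2 : c1 * (x + (b0 - x) * ((t:ℂ))⁻¹) = c1*x + (c1*b0 - c1*x) * (((t⁻¹:ℝ)):ℂ) := by
      push_cast; ring
    rw [h2]
    simp [Complex.add_re, Complex.sub_re, hβdef]
  have keyP : ∀ Z P : ℂ, Z ∈ sphere O₁ r → Z ≠ A → P ∈ sphere O₂ R → P ≠ A → B ≠ Z →
      (Concyclic ({A, Z, B, P} : Set ℂ) ∨ Collinear ℝ ({A, Z, B, P} : Set ℂ)) →
      ∃ t : ℝ, t ≠ 0 ∧ ρ = 1/2 + (β - 1/2) * t⁻¹ ∧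
        (P - A)⁻¹ = (Z - A)⁻¹ + (b0 - (Z - A)⁻¹) * ((t:ℂ))⁻¹ := by
    intro Z P hZ hZA hP hPA hBZ hcase
    set x := (Z - A)⁻¹ with hxdef
    set p := (P - A)⁻¹ with hpdef
    have hZAne : Z - A ≠ 0 := sub_ne_zero.2 hZA
    have hPAne : P - A ≠ 0 := sub_ne_zero.2 hPA
    have hxne : x ≠ 0 := inv_ne_zero hZAne
    have hpne : p ≠ 0 := inv_ne_zero hPAne
    have hx : (c1 * x).re = 1/2 := hL1 Z hZ hZA
    have hp : (c1 * p).re = ρ := hL2 P hP hPA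
    have hpx : p ≠ x := by
      intro h; apply hρne; rw [← hp, h, hx]
    have hbx : b0 ≠ x := by
      intro h
      apply hBZ
      have h2 := congrArg (·⁻¹) h
      simp only [hb0def, hxdef, inv_inv] at h2
      exact sub_left_inj.mp h2
    have hcr : (crossRatio A Z P B).im = 0 := by
      rcases hcase with h | h
      · obtain ⟨⟨o, ρ₀, ho⟩, -⟩ := h
        exact cr_real_sphere o ρ₀ _ _ _ _ (ho A (by simp)) (ho Z (by simp))
          (ho P (by simp)) (ho B (by simp))
      · exact cr_real_collinear h (by simp) (by simp) (by simp) (by simp)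
    have hid : crossRatio A Z P B = (b0 - x) / (p - x) := by
      have hZ' : Z = A + x⁻¹ := by rw [hxdef, inv_inv]; ring
      have hP' : P = A + p⁻¹ := by rw [hpdef, inv_inv]; ring
      have hB' : B = A + b0⁻¹ := by rw [hb0def, inv_inv]; ring
      rw [hZ', hP', hB']
      simp only [crossRatio]
      rw [div_eq_div_iff]
      · field_simp
        ring
      · have e1 : A - (A + b0⁻¹) = -b0⁻¹ := by ring
        have e2 : (A + x⁻¹) - (A + p⁻¹) = x⁻¹ - p⁻¹ := by ring
        rw [e1, e2]
        apply mul_ne_zero (neg_ne_zero.2 (inv_ne_zero hb0ne))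
        intro h
        apply hpx
        rw [sub_eq_zero] at h
        exact (inv_injective h).symm
      · exact sub_ne_zero.2 hpx
    have ht0im : ((b0 - x)/(p - x)).im = 0 := by rw [← hid]; exact hcr
    set t0 : ℂ := (b0 - x)/(p - x) with ht0def
    have ht0ne : t0 ≠ 0 := div_ne_zero (sub_ne_zero.2 hbx) (sub_ne_zero.2 hpx)
    have ht0eq : ((t0.re : ℝ):ℂ) = t0 := by
      apply Complex.ext <;> simp [ht0im]
    have htre : t0.re ≠ 0 := by
      intro h; apply ht0ne
      apply Complex.ext <;> simp [ht0im, h]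
    have hpeq0 : p = x + (b0 - x) * t0⁻¹ := by
      rw [ht0def]
      field_simp
      ring
    have hpeq : p = x + (b0 - x) * ((t0.re : ℝ):ℂ)⁻¹ := by
      rw [ht0eq]; exact hpeq0
    refine ⟨t0.re, htre, ?_, hpeq⟩
    rw [← hp, hpeq, hre_aff x t0.re, hx]
  have hAΩ : A ∈ sphere O₂ R := by
    rw [Metric.mem_sphere, dist_comm]; exact hA₂
  -- Case 1 : B lies on ω  (β = 1/2) : contradiction with hY
  by_cases hβ1 : β = 1/2
  · exfalso
    have habs1 : ‖c1‖ = r := by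
      rw [Complex.norm_def, hn1, Real.sqrt_sq hr.le]
    -- choose a point Z on ω different from A and B
    have hZpick : ∃ Z : ℂ, Z ∈ sphere O₁ r ∧ Z ≠ A ∧ B ≠ Z := by
      by_cases h1 : B = O₁ + c1
      · refine ⟨O₁ + Complex.I * c1, ?_, ?_, ?_⟩
        · rw [Metric.mem_sphere, Complex.dist_eq]
          rw [show O₁ + Complex.I * c1 - O₁ = Complex.I * c1 by ring]
          rw [norm_mul, Complex.norm_I, one_mul, habs1]
        · intro h
          apply hc1ne
          have h2 : (Complex.I + 1) * c1 = 0 := by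
            rw [hc1def] at h ⊢
            linear_combination h
          rcases mul_eq_zero.mp h2 with h3 | h3
          · exfalso
            have := congrArg Complex.im h3
            simp at this
          · exact h3
        · intro h
          rw [h1] at h
          apply hc1ne
          have h2 : (1 - Complex.I) * c1 = 0 := by linear_combination h
          rcases mul_eq_zero.mp h2 with h3 | h3
          · exfalso
            have := congrArg Complex.im h3
            simp at this
          · exact h3
      · refine ⟨O₁ + c1, ?_, ?_, h1⟩
        · rw [Metric.mem_sphere, Complex.dist_eq]
          rw [show O₁ + c1 - O₁ = c1 by ring, habs1]
        · intro h
          apply hc1ne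
          have h2 : (2:ℂ) * c1 = 0 := by
            rw [hc1def] at h ⊢
            linear_combination h
          simpa using h2
    obtain ⟨Z, hZ, hZA, hBZ⟩ := hZpick
    obtain ⟨hP, hPA, hcase⟩ := hY Z hZ hZA
    obtain ⟨t, htne, hteq, -⟩ := keyP Z (Y Z) hZ hZA hP hPA hBZ hcase
    rw [hβ1] at hteq
    simp at hteq
    exact hρne (by linarith)
  -- Case 2 : B lies on Ω  (β = ρ) : then Y X = B always and g = id works
  by_cases hβρ : β = ρ
  · have hYB : ∀ X ∈ sphere O₁ r, X ≠ A → Y X = B := by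
      intro X hX hXA
      obtain ⟨hP, hPA, hcase⟩ := hY X hX hXA
      have hBZ : B ≠ X := by
        intro h
        apply hβ1
        rw [hβdef, hb0def, h]
        exact hL1 X hX hXA
      obtain ⟨t, htne, hteq, hpeq⟩ := keyP X (Y X) hX hXA hP hPA hBZ hcase
      have ht1 : t = 1 := by
        rw [hβρ] at hteq
        have h2 : (ρ - 1/2) * (t - 1) = 0 := by
          field_simp at hteq
          nlinarith [hteq]
        rcases mul_eq_zero.mp h2 with h3 | h3
        · exact absurd (by linarith) hρne
        · linarith
      rw [ht1] at hpeq
      simp at hpeq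
      -- hpeq : (Y X - A)⁻¹ = b0
      have h4 : Y X - A = B - A := by
        have := congrArg (·⁻¹) hpeq
        simpa [hb0def] using this
      exact sub_left_inj.mp h4
    refine ⟨id, ⟨fun X hX => hX, fun X _ => rfl, fun a _ b _ c _ d _ => rfl⟩, ?_⟩
    intro X hX hXA hfX
    simp only [id_eq]
    rw [hYB X hX hXA, hYB (f X) (hf.1 X hX) hfX]
  -- Main case
  have hhalf : ρ - 1/2 ≠ 0 := sub_ne_zero.2 hρne
  have hhalf' : 1/2 - ρ ≠ 0 := sub_ne_zero.2 (Ne.symm hρne)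
  set t1 : ℝ := (β - 1/2)/(ρ - 1/2) with ht1def
  set t2 : ℝ := (β - ρ)/(1/2 - ρ) with ht2def
  have ht1ne : t1 ≠ 0 := div_ne_zero (sub_ne_zero.2 hβ1) hhalf
  have ht2ne : t2 ≠ 0 := div_ne_zero (sub_ne_zero.2 hβρ) hhalf'
  have ht1one : t1 ≠ 1 := by
    intro h
    rw [ht1def, div_eq_one_iff_eq hhalf] at h
    exact hβρ (by linarith)
  have ht2one : t2 ≠ 1 := by
    intro h
    rw [ht2def, div_eq_one_iff_eq hhalf'] at h
    exact hβ1 (by linarith)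
  have hsum : t1 + t2 = 1 := by
    rw [ht1def, ht2def, div_add_div _ _ hhalf hhalf', div_eq_one_iff_eq (mul_ne_zero hhalf hhalf')]
    ring
  set T : ℝ → ℂ → ℂ := fun t z => A + ((t:ℂ) * (z - A)) / (b0 * (z - A) + ((t:ℂ) - 1)) with hTdef
  set Q : ℝ → ℂ → ℂ := fun t z => (z - A)⁻¹ + (b0 - (z - A)⁻¹) * ((t:ℂ))⁻¹ with hQdef
  have hQfact : ∀ (t : ℝ), t ≠ 0 → ∀ z : ℂ, z ≠ A →
      b0 * (z - A) + ((t:ℂ) - 1) = (t:ℂ) * (z - A) * Q t z := by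
    intro t ht z hz
    have htc : (t:ℂ) ≠ 0 := Complex.ofReal_ne_zero.2 ht
    have hzc : z - A ≠ 0 := sub_ne_zero.2 hz
    rw [hQdef]
    field_simp
    ring
  have hQω : ∀ z ∈ sphere O₁ r, z ≠ A → (c1 * Q t1 z).re = ρ := by
    intro z hz hzA
    rw [hQdef]
    simp only
    rw [hre_aff, hL1 z hz hzA, ht1def]
    have h9 : (β - 1/2) * ((ρ - 1/2)/(β - 1/2)) = ρ - 1/2 := by
      rw [mul_div_assoc', mul_comm, mul_div_assoc, div_self (sub_ne_zero.2 hβ1), mul_one]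
    rw [inv_div, h9]
    ring
  have hQΩ : ∀ z ∈ sphere O₂ R, z ≠ A → (c1 * Q t2 z).re = 1/2 := by
    intro z hz hzA
    rw [hQdef]
    simp only
    rw [hre_aff, hL2 z hz hzA, ht2def]
    have h9 : (β - ρ) * ((1/2 - ρ)/(β - ρ)) = 1/2 - ρ := by
      rw [mul_div_assoc', mul_comm, mul_div_assoc, div_self (sub_ne_zero.2 hβρ), mul_one]
    rw [inv_div, h9]
    ring
  have hQωne : ∀ z ∈ sphere O₁ r, z ≠ A → Q t1 z ≠ 0 := by
    intro z hz hzA h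
    have := hQω z hz hzA
    rw [h, mul_zero] at this
    simp at this
    exact hρpos.ne this
  have hQΩne : ∀ z ∈ sphere O₂ R, z ≠ A → Q t2 z ≠ 0 := by
    intro z hz hzA h
    have := hQΩ z hz hzA
    rw [h, mul_zero] at this
    simp at this
  have hDω : ∀ z ∈ sphere O₁ r, b0 * (z - A) + ((t1:ℂ) - 1) ≠ 0 := by
    intro z hz
    by_cases hzA : z = A
    · rw [hzA]
      simp only [sub_self, mul_zero, zero_add]
      intro h
      exact ht1one (by exact_mod_cast sub_eq_zero.mp h)
    · rw [hQfact t1 ht1ne z hzA]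
      exact mul_ne_zero (mul_ne_zero (Complex.ofReal_ne_zero.2 ht1ne) (sub_ne_zero.2 hzA))
        (hQωne z hz hzA)
  have hDΩ : ∀ z ∈ sphere O₂ R, b0 * (z - A) + ((t2:ℂ) - 1) ≠ 0 := by
    intro z hz
    by_cases hzA : z = A
    · rw [hzA]
      simp only [sub_self, mul_zero, zero_add]
      intro h
      exact ht2one (by exact_mod_cast sub_eq_zero.mp h)
    · rw [hQfact t2 ht2ne z hzA]
      refine mul_ne_zero (mul_ne_zero (Complex.ofReal_ne_zero.2 ht2ne) (sub_ne_zero.2 hzA)) ?_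
      intro h
      have := hQΩ z hz hzA
      rw [h, mul_zero] at this
      simp at this
  have hTA : ∀ t : ℝ, T t A = A := by
    intro t
    rw [hTdef]
    simp
  have hTval1 : ∀ z : ℂ, z ≠ A → T t1 z = A + (Q t1 z)⁻¹ := by
    intro z hzA
    rw [hTdef]
    simp only
    rw [hQfact t1 ht1ne z hzA]
    congr 1
    have htc : (t1:ℂ) ≠ 0 := Complex.ofReal_ne_zero.2 ht1ne
    have hzc : z - A ≠ 0 := sub_ne_zero.2 hzA
    rw [div_mul_eq_div_div, div_self (mul_ne_zero htc hzc), one_div]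
  have hTval2 : ∀ z : ℂ, z ≠ A → T t2 z = A + (Q t2 z)⁻¹ := by
    intro z hzA
    rw [hTdef]
    simp only
    rw [hQfact t2 ht2ne z hzA]
    congr 1
    have htc : (t2:ℂ) ≠ 0 := Complex.ofReal_ne_zero.2 ht2ne
    have hzc : z - A ≠ 0 := sub_ne_zero.2 hzA
    rw [div_mul_eq_div_div, div_self (mul_ne_zero htc hzc), one_div]
  have hTω : ∀ z ∈ sphere O₁ r, T t1 z ∈ sphere O₂ R := by
    intro z hz
    by_cases hzA : z = A
    · rw [hzA, hTA]; exact hAΩ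
    · rw [hTval1 z hzA]
      exact hL2' _ (hQω z hz hzA)
  have hTΩ : ∀ z ∈ sphere O₂ R, T t2 z ∈ sphere O₁ r := by
    intro z hz
    by_cases hzA : z = A
    · rw [hzA, hTA]
      rw [Metric.mem_sphere, dist_comm]; exact hA₁
    · rw [hTval2 z hzA]
      exact hL1' _ (hQΩ z hz hzA)
  -- composition identities
  have hTcomp : ∀ (s u : ℝ), s + u = 1 → s ≠ 0 → u ≠ 0 → ∀ z : ℂ,
      b0 * (z - A) + ((s:ℂ) - 1) ≠ 0 → T u (T s z) = z := by
    intro s u hsu hs hu z hD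
    have hsc : (s:ℂ) ≠ 0 := Complex.ofReal_ne_zero.2 hs
    have huc : (u:ℂ) ≠ 0 := Complex.ofReal_ne_zero.2 hu
    have hu1 : (u:ℂ) - 1 = -(s:ℂ) := by
      have : (u:ℝ) = 1 - s := by linarith
      rw [this]; push_cast; ring
    have hs1 : (s:ℂ) - 1 = -(u:ℂ) := by
      have : (s:ℝ) = 1 - u := by linarith
      rw [this]; push_cast; ring
    rw [hTdef]
    simp only
    rw [add_sub_cancel_left]
    have hE : b0 * ((s:ℂ) * (z - A) / (b0 * (z - A) + ((s:ℂ) - 1))) + ((u:ℂ) - 1)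
        = -(s:ℂ) * ((s:ℂ) - 1) / (b0 * (z - A) + ((s:ℂ) - 1)) := by
      rw [hu1]
      field_simp
      ring
    rw [hE]
    have hcalc : (u:ℂ) * ((s:ℂ) * (z - A) / (b0*(z-A)+((s:ℂ)-1)))
        / (-(s:ℂ) * ((s:ℂ) - 1) / (b0*(z-A)+((s:ℂ)-1))) = z - A := by
      rw [mul_div_assoc', div_div_div_cancel_right₀ hD, hs1, neg_mul_neg,
        show (u:ℂ) * ((s:ℂ)*(z-A)) = ((s:ℂ)*(u:ℂ))*(z-A) by ring,
        mul_div_cancel_left₀ _ (mul_ne_zero hsc huc)]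
    rw [hcalc]
    ring
  -- cross ratio preservation
  have hTcr : ∀ (t : ℝ), t ≠ 0 → (t:ℂ) ≠ 1 → ∀ z1 z2 z3 z4 : ℂ,
      b0 * (z1 - A) + ((t:ℂ) - 1) ≠ 0 → b0 * (z2 - A) + ((t:ℂ) - 1) ≠ 0 →
      b0 * (z3 - A) + ((t:ℂ) - 1) ≠ 0 → b0 * (z4 - A) + ((t:ℂ) - 1) ≠ 0 →
      crossRatio (T t z1) (T t z2) (T t z3) (T t z4) = crossRatio z1 z2 z3 z4 := by
    intro t ht ht1 z1 z2 z3 z4 h1 h2 h3 h4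
    have htc : (t:ℂ) ≠ 0 := Complex.ofReal_ne_zero.2 ht
    have hform : ∀ z : ℂ, b0 * (z - A) + ((t:ℂ) - 1) ≠ 0 →
        T t z = (((t:ℂ) + A * b0) * z + (-(A^2*b0) - A)) / (b0 * z + ((t:ℂ) - 1 - A*b0)) := by
      intro z hz
      have hz' : b0 * z + ((t:ℂ) - 1 - A*b0) ≠ 0 := by
        rw [show b0 * z + ((t:ℂ) - 1 - A*b0) = b0 * (z - A) + ((t:ℂ) - 1) by ring]
        exact hz
      rw [hTdef]
      simp only
      rw [eq_div_iff hz']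
      rw [show b0 * z + ((t:ℂ) - 1 - A*b0) = b0 * (z - A) + ((t:ℂ) - 1) by ring]
      rw [add_mul, div_mul_cancel₀ _ hz]
      ring
    rw [hform z1 h1, hform z2 h2, hform z3 h3, hform z4 h4]
    apply cr_moebius
    · rw [show ((t:ℂ) + A * b0) * ((t:ℂ) - 1 - A*b0) - (-(A^2*b0) - A) * b0
          = (t:ℂ) * ((t:ℂ) - 1) by ring]
      exact mul_ne_zero htc (sub_ne_zero.2 ht1)
    all_goals rw [show ∀ z : ℂ, b0 * z + ((t:ℂ) - 1 - A*b0) = b0 * (z - A) + ((t:ℂ) - 1) from fun z => by ring]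
    · exact h1
    · exact h2
    · exact h3
    · exact h4
  have hYT : ∀ X : ℂ, X ∈ sphere O₁ r → X ≠ A → Y X = T t1 X := by
    intro X hX hXA
    obtain ⟨hP, hPA, hcase⟩ := hY X hX hXA
    have hBZ : B ≠ X := by
      intro h
      apply hβ1
      rw [hβdef, hb0def, h]
      exact hL1 X hX hXA
    obtain ⟨t, htne, hteq, hpeq⟩ := keyP X (Y X) hX hXA hP hPA hBZ hcase
    have ht' : t = t1 := by
      rw [ht1def, eq_div_iff hhalf]
      field_simp [htne] at hteq
      linear_combination hteq / 2
    rw [ht'] at hpeq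
    have hQeq : (Y X - A)⁻¹ = Q t1 X := by rw [hQdef]; exact hpeq
    have h3 : Y X = A + (Q t1 X)⁻¹ := by
      rw [← hQeq, inv_inv]; ring
    rw [h3, hTval1 X hXA]
  refine ⟨fun z => T t1 (f (T t2 z)), ⟨?_, ?_, ?_⟩, ?_⟩
  · intro X hX
    exact hTω _ (hf.1 _ (hTΩ X hX))
  · intro X hX
    show T t1 (f (T t2 (T t1 (f (T t2 X))))) = X
    have h1 : T t2 X ∈ sphere O₁ r := hTΩ X hX
    have h2 : f (T t2 X) ∈ sphere O₁ r := hf.1 _ h1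
    rw [hTcomp t1 t2 hsum ht1ne ht2ne _ (hDω _ h2)]
    rw [hf.2.1 _ h1]
    exact hTcomp t2 t1 (by linarith) ht2ne ht1ne X (hDΩ X hX)
  · intro a ha b hb c hc d hd
    show crossRatio (T t1 (f (T t2 a))) (T t1 (f (T t2 b))) (T t1 (f (T t2 c))) (T t1 (f (T t2 d)))
        = crossRatio a b c d
    have hta := hTΩ a ha
    have htb := hTΩ b hb
    have htc := hTΩ c hc
    have htd := hTΩ d hd
    have hfa := hf.1 _ hta
    have hfb := hf.1 _ htb
    have hfc := hf.1 _ htc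
    have hfd := hf.1 _ htd
    rw [hTcr t1 ht1ne (by exact_mod_cast ht1one) _ _ _ _ (hDω _ hfa) (hDω _ hfb)
      (hDω _ hfc) (hDω _ hfd)]
    rw [hf.2.2 _ hta _ htb _ htc _ htd]
    exact hTcr t2 ht2ne (by exact_mod_cast ht2one) a b c d (hDΩ a ha) (hDΩ b hb)
      (hDΩ c hc) (hDΩ d hd)
  · intro X hX hXA hfXA
    show T t1 (f (T t2 (Y X))) = Y (f X)
    rw [hYT X hX hXA, hYT (f X) (hf.1 X hX) hfXA]
    rw [hTcomp t1 t2 hsum ht1ne ht2ne X (hDω X hX)]
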